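/- Averaging-to-minimum subcode extraction: Let e : C → ℝ assign to each unit vector of a finite-dimensional inner product space C of dimension K ≥ 2 a 'failure probability' in [0,1], and suppose that for every orthonormal basis B of C, the average (1/K)·Σ_{ψ∈B} e(ψ) ≤ G, where the minimum over all orthonormal bases is attained. Then there exists a subspace D ⊆ C of dimension ⌊K/2⌋ such that every unit vector ψ ∈ D satisfies e(ψ) ≤ 2G, provided e is continuous. -/

import Mathlib

open scoped BigOperators ComplexOrder

open Module

lemma orthonormal_snoc' {C : Type*} [NormedAddCommGroup C] [InnerProductSpace ℂ C]
    {n : ℕ} {f : Fin n → C} (hf : Orthonormal ℂ f) {ψ : C} (hψ : ‖ψ‖ = 1)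
    (horth : ∀ i, inner ℂ (f i) ψ = (0 : ℂ)) : Orthonormal ℂ (Fin.snoc f ψ) := by
  have horth2 : ∀ i, inner ℂ ψ (f i) = (0 : ℂ) := fun i => by
    rw [inner_eq_zero_symm]; exact horth i
  rw [orthonormal_iff_ite] at hf ⊢
  intro i j
  refine Fin.lastCases ?_ ?_ i <;> [skip; intro i'] <;>
    refine Fin.lastCases ?_ ?_ j <;> try intro j'
  · simp [Fin.snoc_last, inner_self_eq_norm_sq_to_K, hψ]
  · simp [Fin.snoc_last, Fin.snoc_castSucc, horth2 j', (Fin.castSucc_lt_last j').ne']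
  · simp [Fin.snoc_last, Fin.snoc_castSucc, horth i', (Fin.castSucc_lt_last i').ne]
  · simp only [Fin.snoc_castSucc, hf i' j']
    congr 1
    simp [Fin.castSucc_inj]

/-- Averaging-to-minimum subcode extraction: if `C` is a `K`-dimensional complex inner
product space (`K ≥ 2`) and `e` is a continuous function on `C` taking values in `[0,1]`
on unit vectors, such that for every orthonormal basis `B` of `C` the average of `e` over
`B` is at most `G`, then there is a subspace `D` of dimension `⌊K/2⌋` on which every unit
vector `ψ` satisfies `e ψ ≤ 2 * G`. -/
theorem subcode_extraction {C : Type*} [NormedAddCommGroup C] [InnerProductSpace ℂ C]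
    [FiniteDimensional ℂ C] {K : ℕ} (hK : 2 ≤ K) (hdim : Module.finrank ℂ C = K)
    (e : C → ℝ) (he : Continuous e) (he01 : ∀ ψ : C, ‖ψ‖ = 1 → e ψ ∈ Set.Icc (0 : ℝ) 1)
    (G : ℝ)
    (hG : ∀ B : OrthonormalBasis (Fin K) ℂ C, (1 / (K : ℝ)) * ∑ j, e (B j) ≤ G) :
    ∃ D : Submodule ℂ C, Module.finrank ℂ D = K / 2 ∧
      ∀ ψ ∈ D, ‖ψ‖ = 1 → e ψ ≤ 2 * G := by
  by_contra hcon
  push_neg at hcon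
  set m := K / 2 with hm
  have hKpos : (0 : ℝ) < K := by positivity
  -- G is nonnegative
  have hGnn : 0 ≤ G := by
    have B₀ := (stdOrthonormalBasis ℂ C).reindex (finCongr hdim)
    refine le_trans ?_ (hG B₀)
    have h0 : ∀ j, 0 ≤ e (B₀ j) := fun j => (he01 _ (B₀.orthonormal.1 j)).1
    have : (0:ℝ) ≤ ∑ j, e (B₀ j) := Finset.sum_nonneg fun j _ => h0 j
    positivity
  have hm1 : 1 ≤ m := Nat.one_le_div_iff (by norm_num) |>.2 hK
  have hmK : m ≤ K := Nat.div_le_self K 2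
  -- greedy construction
  have key : ∀ n : ℕ, n + m ≤ K + 1 →
      ∃ f : Fin n → C, Orthonormal ℂ f ∧ ∀ i, 2 * G < e (f i) := by
    intro n
    induction n with
    | zero =>
      refine fun _ => ⟨Fin.elim0, ?_, fun i => i.elim0⟩
      rw [orthonormal_iff_ite]
      exact fun i => i.elim0
    | succ n ih =>
      intro hn
      obtain ⟨f, hf, hfe⟩ := ih (by omega)
      -- orthogonal complement
      have hrs : finrank ℂ (Submodule.span ℂ (Set.range f)) = n := by
        rw [finrank_span_eq_card hf.linearIndependent, Fintype.card_fin]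
      have hrW : finrank ℂ ((Submodule.span ℂ (Set.range f))ᗮ) = K - n := by
        have h := Submodule.finrank_add_finrank_orthogonal
          (K := Submodule.span ℂ (Set.range f))
        rw [hrs, hdim] at h
        omega
      have hmW : m ≤ finrank ℂ ((Submodule.span ℂ (Set.range f))ᗮ) := by omega
      -- a subspace of the complement of dimension m
      set bW := stdOrthonormalBasis ℂ ((Submodule.span ℂ (Set.range f))ᗮ) with hbW
      set g : Fin m → C := fun i => (bW (Fin.castLE hmW i) : C) with hg
      have hgo : Orthonormal ℂ g := by
        rw [orthonormal_iff_ite]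
        intro i j
        have h3 := (bW.orthonormal.comp _ (Fin.castLE_injective hmW))
        rw [orthonormal_iff_ite] at h3
        simpa [hg, Submodule.coe_inner] using h3 i j
      have hgW : ∀ i, g i ∈ (Submodule.span ℂ (Set.range f))ᗮ := fun i =>
        Submodule.coe_mem _
      have hrD : finrank ℂ (Submodule.span ℂ (Set.range g)) = m := by
        rw [finrank_span_eq_card hgo.linearIndependent, Fintype.card_fin]
      obtain ⟨ψ, hψD, hψn, hψe⟩ := hcon _ hrD
      have hψW : ψ ∈ (Submodule.span ℂ (Set.range f))ᗮ := by
        have hle : Submodule.span ℂ (Set.range g) ≤ (Submodule.span ℂ (Set.range f))ᗮ :=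
          Submodule.span_le.2 (Set.range_subset_iff.2 hgW)
        exact hle hψD
      have horth : ∀ i, inner ℂ (f i) ψ = (0 : ℂ) := fun i =>
        (Submodule.mem_orthogonal _ ψ).1 hψW _
          (Submodule.subset_span (Set.mem_range_self i))
      exact ⟨Fin.snoc f ψ, orthonormal_snoc' hf hψn horth,
        Fin.lastCases (by simpa using hψe) (fun i => by simpa using hfe i)⟩
  set n := K - m + 1 with hn
  obtain ⟨f, hf, hfe⟩ := key n (by omega)
  have hnK : n ≤ K := by omega
  -- extend to an orthonormal basis
  set v : Fin K → C := fun i => if h : (i : ℕ) < n then f ⟨i, h⟩ else 0 with hv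
  have hres : Orthonormal ℂ (Set.restrict {i : Fin K | (i : ℕ) < n} v) := by
    have hveq : Set.restrict {i : Fin K | (i : ℕ) < n} v
        = f ∘ (fun i : {i : Fin K | (i : ℕ) < n} => (⟨(i : Fin K), i.2⟩ : Fin n)) := by
      funext i
      simp only [Set.restrict_apply, hv, Function.comp_apply]
      exact dif_pos i.2
    rw [hveq]
    exact hf.comp _ (fun a b hab => by
      apply Subtype.ext; apply Fin.ext
      simpa [Fin.ext_iff] using hab)
  obtain ⟨b, hb⟩ := hres.exists_orthonormalBasis_extension_of_card_eq
    (by simp [hdim])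
  have hbf : ∀ (i : Fin K) (h : (i : ℕ) < n), b i = f ⟨i, h⟩ := by
    intro i h
    rw [hb i h]
    simp only [hv]
    rw [dif_pos h]
  -- sums
  have hsum_le : ∑ j, e (b j) ≤ K * G := by
    have h4 := hG b
    rw [div_mul_eq_mul_div, one_mul, div_le_iff₀ hKpos] at h4
    linarith
  have hsum_ge : ∑ i : Fin n, e (b (Fin.castLE hnK i)) ≤ ∑ j, e (b j) := by
    have h5 := Finset.sum_le_sum_of_subset_of_nonneg
      (Finset.subset_univ (Finset.univ.map (Fin.castLEEmb hnK)))
      (fun j _ _ => (he01 _ (b.orthonormal.1 j)).1)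
    rw [Finset.sum_map] at h5
    exact h5
  have hlt : (n : ℝ) * (2 * G) < ∑ i : Fin n, e (b (Fin.castLE hnK i)) := by
    have hne : (Finset.univ : Finset (Fin n)).Nonempty := ⟨⟨0, by omega⟩, Finset.mem_univ _⟩
    calc (n : ℝ) * (2 * G) = ∑ _i : Fin n, 2 * G := by
          simp [Finset.sum_const, mul_comm]
      _ < ∑ i : Fin n, e (b (Fin.castLE hnK i)) := by
          refine Finset.sum_lt_sum_of_nonempty hne fun i _ => ?_
          have hi : ((Fin.castLE hnK i : Fin K) : ℕ) < n := i.is_lt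
          rw [hbf _ hi]
          exact hfe _
  have h2n : (K : ℝ) ≤ 2 * n := by
    have : K ≤ 2 * n := by omega
    exact_mod_cast this
  nlinarith [hsum_le, hsum_ge, hlt]
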